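/- Suppose the empirical covariance matrix Σ_n = (1/n) Σ_{i=1}^n x_i x_iᵀ is invertible, ‖θ⋆‖ = 1 and 0 < L < 1. Then every minimizer θ_n of the constrained empirical risk (1/n) Σ_{i=1}^n (⟨x_i, θ⟩ − ⟨x_i, θ⋆⟩)² over {θ : ‖θ‖ ≤ L} satisfies ‖θ_n‖ = L, and there exists λ_n > 0 such that θ_n = (Σ_n + λ_n I)^{-1} Σ_n θ⋆. -/

import Mathlib

open Matrix

private lemma sum3_comm' {a b c : ℕ} (f : Fin a → Fin b → Fin c → ℝ) :
    ∑ i, ∑ j, ∑ k, f i j k = ∑ k, ∑ j, ∑ i, f i j k :=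
  calc ∑ i, ∑ j, ∑ k, f i j k
      = ∑ j, ∑ i, ∑ k, f i j k := Finset.sum_comm
    _ = ∑ j, ∑ k, ∑ i, f i j k := Finset.sum_congr rfl fun _ _ => Finset.sum_comm
    _ = ∑ k, ∑ j, ∑ i, f i j k := Finset.sum_comm

private lemma dot_self_pos {d : ℕ} (v : Fin d → ℝ) (hv : v ≠ 0) : 0 < v ⬝ᵥ v := by
  obtain ⟨i, hi⟩ := Function.ne_iff.mp hv
  have h1 : 0 < v i * v i := mul_self_pos.mpr hi
  have h2 : v i * v i ≤ ∑ j : Fin d, v j * v j :=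
    Finset.single_le_sum (f := fun j => v j * v j) (fun j _ => mul_self_nonneg _)
      (Finset.mem_univ i)
  calc (0:ℝ) < v i * v i := h1
    _ ≤ ∑ j : Fin d, v j * v j := h2
    _ = v ⬝ᵥ v := rfl

set_option maxHeartbeats 2000000 in
/-- **KKT characterization of the constrained ERM.**
If the empirical covariance matrix `Σ_n = (1/n) ∑ i x_i x_iᵀ` is invertible,
`‖θ⋆‖ = 1` and `0 < L < 1`, then every minimizer `θ_n` of the empirical risk
`(1/n) ∑ i (⟨x_i, θ⟩ − ⟨x_i, θ⋆⟩)²` over `{θ : ‖θ‖ ≤ L}` lies on the boundary,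
`‖θ_n‖ = L`, and there exists `λ_n > 0` with `θ_n = (Σ_n + λ_n I)⁻¹ Σ_n θ⋆`.
(Euclidean norms are expressed via `Real.sqrt (v ⬝ᵥ v)`.) -/
theorem erm_kkt_characterization
    (d n : ℕ) (hd : 1 ≤ d) (hn : 1 ≤ n)
    (x : Fin n → (Fin d → ℝ)) (θstar : Fin d → ℝ) (L : ℝ)
    (hθstar : Real.sqrt (θstar ⬝ᵥ θstar) = 1) (hL0 : 0 < L) (hL1 : L < 1)
    (Sn : Matrix (Fin d) (Fin d) ℝ)
    (hSn : Sn = (n : ℝ)⁻¹ • ∑ i : Fin n, vecMulVec (x i) (x i))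
    (hSn_inv : IsUnit Sn.det)
    (θn : Fin d → ℝ)
    (hθn_feas : Real.sqrt (θn ⬝ᵥ θn) ≤ L)
    (hθn_min : ∀ θ : Fin d → ℝ, Real.sqrt (θ ⬝ᵥ θ) ≤ L →
      (n : ℝ)⁻¹ * ∑ i : Fin n, (x i ⬝ᵥ θn - x i ⬝ᵥ θstar) ^ 2 ≤
        (n : ℝ)⁻¹ * ∑ i : Fin n, (x i ⬝ᵥ θ - x i ⬝ᵥ θstar) ^ 2) :
    Real.sqrt (θn ⬝ᵥ θn) = L ∧
    ∃ lam : ℝ, 0 < lam ∧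
      θn = (Sn + lam • (1 : Matrix (Fin d) (Fin d) ℝ))⁻¹ *ᵥ (Sn *ᵥ θstar) := by
  have hn0 : (0:ℝ) < n := by exact_mod_cast hn
  -- the bilinear form associated to Sn
  set B : (Fin d → ℝ) → (Fin d → ℝ) → ℝ :=
    fun u v => (n : ℝ)⁻¹ * ∑ i : Fin n, (x i ⬝ᵥ u) * (x i ⬝ᵥ v) with hBdef
  have hB : ∀ u v, u ⬝ᵥ (Sn *ᵥ v) = B u v := by
    intro u v
    rw [hSn, hBdef]
    simp only [Matrix.mulVec, dotProduct, Matrix.smul_apply, Matrix.sum_apply,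
      Matrix.vecMulVec_apply, smul_eq_mul, Finset.sum_mul, Finset.mul_sum]
    rw [sum3_comm' (fun j k i => u j * ((n:ℝ)⁻¹ * (x i j * x i k) * v k))]
    exact Finset.sum_congr rfl fun i _ => Finset.sum_congr rfl fun k _ =>
      Finset.sum_congr rfl fun j _ => by ring
  have hmv : ∀ v, Sn *ᵥ v = (n:ℝ)⁻¹ • ∑ i : Fin n, (x i ⬝ᵥ v) • x i := by
    intro v
    rw [hSn]
    funext j
    simp only [Matrix.mulVec, dotProduct, Matrix.smul_apply, Matrix.sum_apply,
      Matrix.vecMulVec_apply, smul_eq_mul, Finset.sum_mul, Finset.mul_sum, Pi.smul_apply,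
      Finset.sum_apply]
    rw [Finset.sum_comm]
    exact Finset.sum_congr rfl fun i _ => Finset.sum_congr rfl fun k _ => by ring
  have hBpos : ∀ v, 0 ≤ B v v := fun v =>
    mul_nonneg (by positivity) (Finset.sum_nonneg fun i _ => mul_self_nonneg _)
  have hker : ∀ v, Sn *ᵥ v = 0 → v = 0 := by
    intro v hv
    by_contra h0
    exact (isUnit_iff_ne_zero.mp hSn_inv)
      (Matrix.exists_mulVec_eq_zero_iff.mp ⟨v, h0, hv⟩)
  have hBzero : ∀ v, v ≠ 0 → 0 < B v v := by
    intro v hv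
    rcases lt_or_eq_of_le (hBpos v) with h | h
    · exact h
    exfalso
    have hsum : ∑ i : Fin n, (x i ⬝ᵥ v) * (x i ⬝ᵥ v) = 0 := by
      have h' := h.symm
      rw [hBdef] at h'
      simp only at h'
      have := mul_eq_zero.mp h'
      rcases this with h'' | h''
      · exact absurd h'' (by positivity)
      · exact h''
    have hterm : ∀ i ∈ Finset.univ, (x i ⬝ᵥ v) • x i = (0 : Fin d → ℝ) := by
      intro i hi
      have hle := Finset.single_le_sum (f := fun i => (x i ⬝ᵥ v) * (x i ⬝ᵥ v))
        (fun i _ => mul_self_nonneg _) (Finset.mem_univ i)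
      rw [hsum] at hle
      have hxi : x i ⬝ᵥ v = 0 := mul_self_eq_zero.mp (le_antisymm hle (mul_self_nonneg _))
      simp [hxi]
    have hz : Sn *ᵥ v = 0 := by
      rw [hmv, Finset.sum_congr rfl hterm]
      simp
    exact hv (hker v hz)
  -- risk as a quadratic form
  have hrisk : ∀ θ, (n:ℝ)⁻¹ * ∑ i : Fin n, (x i ⬝ᵥ θ - x i ⬝ᵥ θstar) ^ 2
      = B (θ - θstar) (θ - θstar) := by
    intro θ
    rw [hBdef]
    simp only
    congr 1
    exact Finset.sum_congr rfl fun i _ => by rw [dotProduct_sub]; ring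
  -- bilinearity facts
  have hBsmul : ∀ (s : ℝ) a b, B (s • a) b = s * B a b := by
    intro s a b
    rw [hBdef]
    simp only [dotProduct_smul, smul_dotProduct, smul_eq_mul, mul_assoc]
    rw [← Finset.mul_sum]
    ring
  have hBcomm : ∀ a b, B a b = B b a := by
    intro a b
    rw [hBdef]
    exact congrArg _ (Finset.sum_congr rfl fun i _ => mul_comm _ _)
  have hBexp : ∀ a b, B (a + b) (a + b) = B a a + 2 * B a b + B b b := by
    intro a b
    rw [hBdef]
    simp only [dotProduct_add]
    have hexp : ∑ i : Fin n, (x i ⬝ᵥ a + x i ⬝ᵥ b) * (x i ⬝ᵥ a + x i ⬝ᵥ b)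
        = ∑ i : Fin n, x i ⬝ᵥ a * (x i ⬝ᵥ a)
          + ∑ i : Fin n, 2 * (x i ⬝ᵥ a * (x i ⬝ᵥ b))
          + ∑ i : Fin n, x i ⬝ᵥ b * (x i ⬝ᵥ b) := by
      rw [← Finset.sum_add_distrib, ← Finset.sum_add_distrib]
      exact Finset.sum_congr rfl fun i _ => by ring
    rw [hexp, ← Finset.mul_sum]
    ring
  -- Euclidean space bridge
  set ev : (Fin d → ℝ) → EuclideanSpace ℝ (Fin d) :=
    fun v => (WithLp.equiv 2 (Fin d → ℝ)).symm v with hev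
  have hip : ∀ u v : Fin d → ℝ, @inner ℝ _ _ (ev u) (ev v) = u ⬝ᵥ v := by
    intro u v
    simp [hev, PiLp.inner_apply, dotProduct, RCLike.inner_apply, mul_comm]
  have hnrm : ∀ v : Fin d → ℝ, ‖ev v‖ = Real.sqrt (v ⬝ᵥ v) := by
    intro v
    rw [EuclideanSpace.norm_eq]
    simp [hev, dotProduct, sq]
  have hev_add : ∀ u v : Fin d → ℝ, ev (u + v) = ev u + ev v := fun u v =>
    WithLp.toLp_add _ _ _
  have hev_smul : ∀ (s : ℝ) (v : Fin d → ℝ), ev (s • v) = s • ev v := fun s v =>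
    WithLp.toLp_smul _ _ _
  have hev_inj : Function.Injective ev := (WithLp.equiv 2 (Fin d → ℝ)).symm.injective
  -- convex combination stays in the ball
  have hconv : ∀ (a b : Fin d → ℝ) (t : ℝ), 0 ≤ t → t ≤ 1 →
      Real.sqrt (a ⬝ᵥ a) ≤ L → Real.sqrt (b ⬝ᵥ b) ≤ L →
      Real.sqrt (((1-t) • a + t • b) ⬝ᵥ ((1-t) • a + t • b)) ≤ L := by
    intro a b t ht0 ht1 ha hb
    rw [← hnrm, hev_add, hev_smul, hev_smul]
    have h1 : ‖ev a‖ ≤ L := by rw [hnrm]; exact ha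
    have h2 : ‖ev b‖ ≤ L := by rw [hnrm]; exact hb
    calc ‖(1-t) • ev a + t • ev b‖ ≤ ‖(1-t) • ev a‖ + ‖t • ev b‖ := norm_add_le _ _
      _ = (1-t) * ‖ev a‖ + t * ‖ev b‖ := by
          rw [norm_smul, norm_smul, Real.norm_eq_abs, Real.norm_eq_abs,
            abs_of_nonneg ht0, abs_of_nonneg (by linarith : (0:ℝ) ≤ 1 - t)]
      _ ≤ (1-t) * L + t * L := by
          have := mul_le_mul_of_nonneg_left h1 (by linarith : (0:ℝ) ≤ 1 - t)
          have := mul_le_mul_of_nonneg_left h2 ht0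
          nlinarith
      _ = L := by ring
  -- w ≠ 0
  set w : Fin d → ℝ := θn - θstar with hw
  have hwne : w ≠ 0 := by
    intro h0
    have : θn = θstar := by rwa [hw, sub_eq_zero] at h0
    rw [this, hθstar] at hθn_feas
    linarith
  have hQw : 0 < B w w := hBzero w hwne
  -- Part A: boundary
  have hbdry : Real.sqrt (θn ⬝ᵥ θn) = L := by
    by_contra hne
    have hlt : Real.sqrt (θn ⬝ᵥ θn) < L := lt_of_le_of_ne hθn_feas hne
    set r := Real.sqrt (θn ⬝ᵥ θn) with hr
    have hr0 : 0 ≤ r := Real.sqrt_nonneg _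
    set t : ℝ := (L - r) / (1 - r) with ht
    have h1r : 0 < 1 - r := by linarith
    have ht0 : 0 < t := div_pos (by linarith) h1r
    have ht1 : t < 1 := by rw [ht, div_lt_one h1r]; linarith
    set θt : Fin d → ℝ := (1-t) • θn + t • θstar with hθt
    have hfeas : Real.sqrt (θt ⬝ᵥ θt) ≤ L := by
      have key : Real.sqrt (θt ⬝ᵥ θt) ≤ (1-t) * r + t * 1 := by
        rw [← hnrm, hθt, hev_add, hev_smul, hev_smul]
        calc ‖(1-t) • ev θn + t • ev θstar‖
            ≤ ‖(1-t) • ev θn‖ + ‖t • ev θstar‖ := norm_add_le _ _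
          _ = (1-t) * r + t * 1 := by
              rw [norm_smul, norm_smul, hnrm, hnrm, hθstar, ← hr,
                Real.norm_eq_abs, Real.norm_eq_abs, abs_of_nonneg ht0.le,
                abs_of_nonneg (by linarith : (0:ℝ) ≤ 1 - t)]
      have heq : (1-t) * r + t * 1 = L := by
        rw [ht]; field_simp; ring
      linarith
    have hmin := hθn_min θt hfeas
    rw [hrisk, hrisk] at hmin
    have hθtsub : θt - θstar = (1-t) • w := by
      rw [hθt, hw]; funext i
      simp only [Pi.sub_apply, Pi.add_apply, Pi.smul_apply, smul_eq_mul]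
      ring
    rw [hθtsub] at hmin
    have hscale : B ((1-t) • w) ((1-t) • w) = (1-t)^2 * B w w := by
      rw [hBsmul, hBcomm, hBsmul, hBcomm]; ring
    rw [hscale, ← hw] at hmin
    have hsq : (1-t)^2 < 1 := by nlinarith
    nlinarith
  refine ⟨hbdry, ?_⟩
  -- Part B: first-order condition
  have hFO : ∀ θ : Fin d → ℝ, Real.sqrt (θ ⬝ᵥ θ) ≤ L → 0 ≤ B (θ - θn) w := by
    intro θ hθ
    set v : Fin d → ℝ := θ - θn with hv
    have key : ∀ t : ℝ, 0 < t → t ≤ 1 → 0 ≤ 2 * B v w + t * B v v := by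
      intro t ht0 ht1
      have hfeas : Real.sqrt ((θn + t • v) ⬝ᵥ (θn + t • v)) ≤ L := by
        have hcomb : θn + t • v = (1-t) • θn + t • θ := by
          rw [hv]; funext i
          simp only [Pi.add_apply, Pi.smul_apply, Pi.sub_apply, smul_eq_mul]
          ring
        rw [hcomb]
        exact hconv θn θ t ht0.le ht1 hθn_feas hθ
      have hmin := hθn_min (θn + t • v) hfeas
      rw [hrisk, hrisk] at hmin
      have hsub : θn + t • v - θstar = w + t • v := by
        rw [hw]; funext i
        simp only [Pi.sub_apply, Pi.add_apply, Pi.smul_apply, smul_eq_mul]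
        ring
      rw [hsub, hBexp] at hmin
      have e1 : B w (t • v) = t * B v w := by rw [hBcomm, hBsmul]
      have e2 : B (t • v) (t • v) = t^2 * B v v := by
        rw [hBsmul, hBcomm, hBsmul, hBcomm]; ring
      rw [e1, e2] at hmin
      nlinarith
    by_contra hneg
    push_neg at hneg
    set C := B v v with hC
    have hC0 : 0 ≤ C := hBpos v
    set t : ℝ := min 1 (-(B v w) / (C + 1)) with htd
    have ht0 : 0 < t := lt_min one_pos (div_pos (by linarith) (by linarith))
    have ht1 : t ≤ 1 := min_le_left _ _
    have h2 := key t ht0 ht1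
    have htle : t ≤ -(B v w) / (C + 1) := min_le_right _ _
    have hstep : t * C ≤ -(B v w) := by
      calc t * C ≤ (-(B v w) / (C + 1)) * C := mul_le_mul_of_nonneg_right htle hC0
        _ ≤ -(B v w) := by
            rw [div_mul_eq_mul_div, div_le_iff₀ (by linarith : (0:ℝ) < C + 1)]
            nlinarith
    linarith
  -- gradient vector
  set g : Fin d → ℝ := Sn *ᵥ w with hg
  have hgne : g ≠ 0 := fun h0 => hwne (hker w h0)
  have hgg0 : 0 < g ⬝ᵥ g := dot_self_pos g hgne
  set G : ℝ := Real.sqrt (g ⬝ᵥ g) with hG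
  have hG0 : 0 < G := Real.sqrt_pos.mpr hgg0
  have hGsq : G ^ 2 = g ⬝ᵥ g := Real.sq_sqrt hgg0.le
  -- linear inequality: g ⬝ᵥ θn ≤ g ⬝ᵥ θ for all feasible θ
  have hlin : ∀ θ : Fin d → ℝ, Real.sqrt (θ ⬝ᵥ θ) ≤ L → g ⬝ᵥ θn ≤ g ⬝ᵥ θ := by
    intro θ hθ
    have h1 : (θ - θn) ⬝ᵥ g = B (θ - θn) w := by rw [hg]; exact hB _ _
    have h2 := hFO θ hθ
    rw [← h1, sub_dotProduct] at h2
    have h3 : θn ⬝ᵥ g ≤ θ ⬝ᵥ g := by linarith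
    calc g ⬝ᵥ θn = θn ⬝ᵥ g := dotProduct_comm _ _
      _ ≤ θ ⬝ᵥ g := h3
      _ = g ⬝ᵥ θ := dotProduct_comm _ _
  -- test direction
  set θ0 : Fin d → ℝ := (-(L/G)) • g with hθ0
  have hθ0feas : Real.sqrt (θ0 ⬝ᵥ θ0) = L := by
    rw [← hnrm, hθ0, hev_smul, norm_smul, hnrm, ← hG, Real.norm_eq_abs, abs_neg,
      abs_of_pos (div_pos hL0 hG0)]
    field_simp
  have h2 := hlin θ0 (le_of_eq hθ0feas)
  have h3 : g ⬝ᵥ θ0 = -(G * L) := by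
    rw [hθ0, dotProduct_smul, smul_eq_mul, ← hGsq]
    field_simp
  -- Cauchy–Schwarz
  have hCS : -(G * L) ≤ g ⬝ᵥ θn := by
    have hcs := real_inner_le_norm (ev g) (ev (-θn))
    rw [hip, hnrm, hnrm] at hcs
    have hnn : (-θn) ⬝ᵥ (-θn) = θn ⬝ᵥ θn := by rw [neg_dotProduct, dotProduct_neg, neg_neg]
    rw [hnn, hbdry, ← hG, dotProduct_neg] at hcs
    linarith
  have heq : g ⬝ᵥ θn = -(G * L) := le_antisymm (by linarith) hCS
  -- equality in Cauchy–Schwarz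
  have hinner : @inner ℝ _ _ (ev g) (ev (-θn)) = ‖ev g‖ * ‖ev (-θn)‖ := by
    rw [hip, hnrm, hnrm]
    have hnn : (-θn) ⬝ᵥ (-θn) = θn ⬝ᵥ θn := by rw [neg_dotProduct, dotProduct_neg, neg_neg]
    rw [hnn, hbdry, ← hG, dotProduct_neg, heq]
    ring
  have hcase := inner_eq_norm_mul_iff_real.mp hinner
  have hng : ‖ev g‖ = G := by rw [hnrm, hG]
  have hnθ : ‖ev (-θn)‖ = L := by
    rw [hnrm]
    have hnn : (-θn) ⬝ᵥ (-θn) = θn ⬝ᵥ θn := by rw [neg_dotProduct, dotProduct_neg, neg_neg]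
    rw [hnn, hbdry]
  rw [hng, hnθ] at hcase
  -- L • g = G • (-θn)
  have hsm : ev (L • g) = ev (G • (-θn)) := by
    rw [hev_smul, hev_smul]; exact hcase
  have hLg : L • g = G • (-θn) := hev_inj hsm
  set lam : ℝ := G / L with hlam
  have hlam0 : 0 < lam := div_pos hG0 hL0
  have hgeq : g = -(lam • θn) := by
    funext i
    have := congrFun hLg i
    simp only [Pi.smul_apply, Pi.neg_apply, smul_eq_mul, hlam] at this ⊢
    field_simp
    linarith
  -- the KKT matrix equation
  set M : Matrix (Fin d) (Fin d) ℝ := Sn + lam • (1 : Matrix (Fin d) (Fin d) ℝ) with hMdef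
  have hMθ : M *ᵥ θn = Sn *ᵥ θstar := by
    rw [hMdef, Matrix.add_mulVec, Matrix.smul_mulVec, Matrix.one_mulVec]
    have hdiff : Sn *ᵥ θn - Sn *ᵥ θstar = -(lam • θn) := by
      rw [← Matrix.mulVec_sub, ← hw, ← hg]; exact hgeq
    funext i
    have := congrFun hdiff i
    simp only [Pi.sub_apply, Pi.neg_apply, Pi.smul_apply, Pi.add_apply, smul_eq_mul] at this ⊢
    linarith
  have hMdet : IsUnit M.det := by
    rw [isUnit_iff_ne_zero]
    intro hdet
    obtain ⟨v, hv0, hv⟩ := Matrix.exists_mulVec_eq_zero_iff.mpr hdet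
    have hq : v ⬝ᵥ (M *ᵥ v) = 0 := by rw [hv]; simp
    rw [hMdef, Matrix.add_mulVec, Matrix.smul_mulVec, Matrix.one_mulVec,
      dotProduct_add, hB, dotProduct_smul, smul_eq_mul] at hq
    have hvv : 0 < v ⬝ᵥ v := dot_self_pos v hv0
    have := hBpos v
    nlinarith
  refine ⟨lam, hlam0, ?_⟩
  rw [← hMθ, Matrix.mulVec_mulVec, Matrix.nonsing_inv_mul M hMdet, Matrix.one_mulVec]
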